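/- The map F_III(α,β): (x,y) ↦ ((y/α)P, (x/β)P) with P = (αx−βy)/(x−y) satisfies the Yang–Baxter relation on all triples where the relevant denominators are nonzero and the parameters are nonzero. -/

import Mathlib

set_option maxHeartbeats 2000000


open Function

variable {K : Type*} [Field K]

/-- lift a map on pairs to act on coordinates 1,2 of a triple -/
def lift12 {X : Type*} (f : X × X → X × X) : X × X × X → X × X × X :=
  fun p => ((f (p.1, p.2.1)).1, (f (p.1, p.2.1)).2, p.2.2)

/-- lift to coordinates 1,3 -/
def lift13 {X : Type*} (f : X × X → X × X) : X × X × X → X × X × X :=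
  fun p => ((f (p.1, p.2.2)).1, p.2.1, (f (p.1, p.2.2)).2)

/-- lift to coordinates 2,3 -/
def lift23 {X : Type*} (f : X × X → X × X) : X × X × X → X × X × X :=
  fun p => (p.1, (f (p.2.1, p.2.2)).1, (f (p.2.1, p.2.2)).2)

def FIIIMap (a b : K) : K × K → K × K :=
  fun p => ((p.2 / a) * ((a*p.1 - b*p.2)/(p.1 - p.2)), (p.1 / b) * ((a*p.1 - b*p.2)/(p.1 - p.2)))


private lemma qdiv {K : Type*} [Field K] (a b c d : K) :
    (a / b) / (c / d) = a * d / (b * c) := by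
  simp only [division_def, mul_inv_rev, inv_inv]; ring

private lemma qmul {K : Type*} [Field K] (a b c d e : K) :
    (a / b) / c * (d / e) = a * d / (b * c * e) := by
  simp only [division_def, mul_inv_rev]; ring

theorem yangBaxter_FIII (a1 a2 a3 x y z : K)
    (hp1 : a1 ≠ 0) (hp2 : a2 ≠ 0) (hp3 : a3 ≠ 0)
    (h1 : (x - y) ≠ 0)
    (h2 : ((lift12 (FIIIMap a1 a2) (x, y, z)).1 - (lift12 (FIIIMap a1 a2) (x, y, z)).2.2) ≠ 0)
    (h3 : ((lift13 (FIIIMap a1 a3) (lift12 (FIIIMap a1 a2) (x, y, z))).2.1 - (lift13 (FIIIMap a1 a3) (lift12 (FIIIMap a1 a2) (x, y, z))).2.2) ≠ 0)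
    (h4 : (y - z) ≠ 0)
    (h5 : ((lift23 (FIIIMap a2 a3) (x, y, z)).1 - (lift23 (FIIIMap a2 a3) (x, y, z)).2.2) ≠ 0)
    (h6 : ((lift13 (FIIIMap a1 a3) (lift23 (FIIIMap a2 a3) (x, y, z))).1 - (lift13 (FIIIMap a1 a3) (lift23 (FIIIMap a2 a3) (x, y, z))).2.1) ≠ 0) :
    lift23 (FIIIMap a2 a3) (lift13 (FIIIMap a1 a3) (lift12 (FIIIMap a1 a2) (x, y, z))) =
      lift12 (FIIIMap a1 a2) (lift13 (FIIIMap a1 a3) (lift23 (FIIIMap a2 a3) (x, y, z))) := by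
  dsimp only [lift12, lift13, lift23, FIIIMap] at h2 h3 h5 h6 ⊢
  have eX1 : y / a1 * ((a1 * x - a2 * y) / (x - y)) = y * (a1 * x - a2 * y) / (a1 * (x - y)) := div_mul_div_comm _ _ _ _
  have eY1 : x / a2 * ((a1 * x - a2 * y) / (x - y)) = x * (a1 * x - a2 * y) / (a2 * (x - y)) := div_mul_div_comm _ _ _ _
  have eU : z / a2 * ((a2 * y - a3 * z) / (y - z)) = z * (a2 * y - a3 * z) / (a2 * (y - z)) := div_mul_div_comm _ _ _ _
  have eV : y / a3 * ((a2 * y - a3 * z) / (y - z)) = y * (a2 * y - a3 * z) / (a3 * (y - z)) := div_mul_div_comm _ _ _ _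
  rw [eX1] at h2 h3 ⊢
  rw [eY1] at h3 ⊢
  rw [eU] at h6 ⊢
  rw [eV] at h5 h6 ⊢
  have eD : y * (a1 * x - a2 * y) / (a1 * (x - y)) - z = (y * (a1 * x - a2 * y) - a1 * z * (x - y)) / (a1 * (x - y)) := by field_simp
  rw [eD] at h2 h3 ⊢
  have hD2 : (y * (a1 * x - a2 * y) - a1 * z * (x - y)) ≠ 0 := fun h => h2 (by rw [h, zero_div])
  have eXV : x - y * (a2 * y - a3 * z) / (a3 * (y - z)) = (y * (a3 * x - a2 * y) - a3 * z * (x - y)) / (a3 * (y - z)) := by field_simp; ring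
  rw [eXV] at h5 h6 ⊢
  have hEM : (y * (a3 * x - a2 * y) - a3 * z * (x - y)) ≠ 0 := fun h => h5 (by rw [h, zero_div])
  have eX2 : z / a1 * ((a1 * (y * (a1 * x - a2 * y) / (a1 * (x - y))) - a3 * z) / ((y * (a1 * x - a2 * y) - a1 * z * (x - y)) / (a1 * (x - y)))) = z * (y * (a1 * x - a2 * y) - a3 * z * (x - y)) / (y * (a1 * x - a2 * y) - a1 * z * (x - y)) := by
    field_simp
  have eZ2 : (y * (a1 * x - a2 * y) / (a1 * (x - y))) / a3 * ((a1 * (y * (a1 * x - a2 * y) / (a1 * (x - y))) - a3 * z) / ((y * (a1 * x - a2 * y) - a1 * z * (x - y)) / (a1 * (x - y)))) = y * (a1 * x - a2 * y) * (y * (a1 * x - a2 * y) - a3 * z * (x - y)) / (a3 * (x - y) * (y * (a1 * x - a2 * y) - a1 * z * (x - y))) := by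
    field_simp
  rw [eX2]
  rw [eZ2] at h3 ⊢
  have eT : x * (a1 * x - a2 * y) / (a2 * (x - y)) - (y * (a1 * x - a2 * y) * (y * (a1 * x - a2 * y) - a3 * z * (x - y)) / (a3 * (x - y) * (y * (a1 * x - a2 * y) - a1 * z * (x - y)))) = (a1 * x - a2 * y) * (a1 * x - a2 * y) * (y * (a3 * x - a2 * y) - a3 * z * (x - y)) / (a2 * a3 * (x - y) * (y * (a1 * x - a2 * y) - a1 * z * (x - y))) := by
    rw [div_sub_div _ _ (mul_ne_zero hp2 h1) (mul_ne_zero (mul_ne_zero hp3 h1) hD2), div_eq_div_iff (mul_ne_zero (mul_ne_zero hp2 h1) (mul_ne_zero (mul_ne_zero hp3 h1) hD2)) (mul_ne_zero (mul_ne_zero (mul_ne_zero hp2 hp3) h1) hD2)]; ring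
  rw [eT] at h3 ⊢
  have eN : a2 * (x * (a1 * x - a2 * y) / (a2 * (x - y))) - a3 * (y * (a1 * x - a2 * y) * (y * (a1 * x - a2 * y) - a3 * z * (x - y)) / (a3 * (x - y) * (y * (a1 * x - a2 * y) - a1 * z * (x - y)))) = (a1 * x - a2 * y) * (a1 * x * (y - z) - y * (a2 * y - a3 * z)) / (y * (a1 * x - a2 * y) - a1 * z * (x - y)) := by
    rw [← mul_div_assoc, ← mul_div_assoc, div_sub_div _ _ (mul_ne_zero hp2 h1) (mul_ne_zero (mul_ne_zero hp3 h1) hD2), div_eq_div_iff (mul_ne_zero (mul_ne_zero hp2 h1) (mul_ne_zero (mul_ne_zero hp3 h1) hD2)) hD2]; ring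
  rw [eN]
  have hA : (a1 * x - a2 * y) ≠ 0 := fun h => h3 (by rw [h]; simp)
  have eX : (y * (a2 * y - a3 * z) / (a3 * (y - z))) / a1 * ((a1 * x - a3 * (y * (a2 * y - a3 * z) / (a3 * (y - z)))) / ((y * (a3 * x - a2 * y) - a3 * z * (x - y)) / (a3 * (y - z)))) = y * (a2 * y - a3 * z) * (a1 * x * (y - z) - y * (a2 * y - a3 * z)) / (a1 * (y - z) * (y * (a3 * x - a2 * y) - a3 * z * (x - y))) := by
    field_simp
  have eZ : x / a3 * ((a1 * x - a3 * (y * (a2 * y - a3 * z) / (a3 * (y - z)))) / ((y * (a3 * x - a2 * y) - a3 * z * (x - y)) / (a3 * (y - z)))) = x * (a1 * x * (y - z) - y * (a2 * y - a3 * z)) / (y * (a3 * x - a2 * y) - a3 * z * (x - y)) := by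
    field_simp
  rw [eX] at h6 ⊢
  rw [eZ]
  have eW : y * (a2 * y - a3 * z) * (a1 * x * (y - z) - y * (a2 * y - a3 * z)) / (a1 * (y - z) * (y * (a3 * x - a2 * y) - a3 * z * (x - y))) - (z * (a2 * y - a3 * z) / (a2 * (y - z))) = (a2 * y - a3 * z) * (a2 * y - a3 * z) * (y * (a1 * x - a2 * y) - a1 * z * (x - y)) / (a1 * a2 * (y - z) * (y * (a3 * x - a2 * y) - a3 * z * (x - y))) := by
    rw [div_sub_div _ _ (mul_ne_zero (mul_ne_zero hp1 h4) hEM) (mul_ne_zero hp2 h4), div_eq_div_iff (mul_ne_zero (mul_ne_zero (mul_ne_zero hp1 h4) hEM) (mul_ne_zero hp2 h4)) (mul_ne_zero (mul_ne_zero (mul_ne_zero hp1 hp2) h4) hEM)]; ring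
  rw [eW] at h6 ⊢
  have hC : (a2 * y - a3 * z) ≠ 0 := fun h => h6 (by rw [h]; simp)
  have eNr : a1 * (y * (a2 * y - a3 * z) * (a1 * x * (y - z) - y * (a2 * y - a3 * z)) / (a1 * (y - z) * (y * (a3 * x - a2 * y) - a3 * z * (x - y)))) - a2 * (z * (a2 * y - a3 * z) / (a2 * (y - z))) = (a2 * y - a3 * z) * (y * (a1 * x - a2 * y) - a3 * z * (x - y)) / (y * (a3 * x - a2 * y) - a3 * z * (x - y)) := by
    rw [← mul_div_assoc, ← mul_div_assoc, div_sub_div _ _ (mul_ne_zero (mul_ne_zero hp1 h4) hEM) (mul_ne_zero hp2 h4), div_eq_div_iff (mul_ne_zero (mul_ne_zero (mul_ne_zero hp1 h4) hEM) (mul_ne_zero hp2 h4)) hEM]; ring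
  rw [eNr]
  have eQ : ((a1 * x - a2 * y) * (a1 * x * (y - z) - y * (a2 * y - a3 * z)) / (y * (a1 * x - a2 * y) - a1 * z * (x - y))) / ((a1 * x - a2 * y) * (a1 * x - a2 * y) * (y * (a3 * x - a2 * y) - a3 * z * (x - y)) / (a2 * a3 * (x - y) * (y * (a1 * x - a2 * y) - a1 * z * (x - y)))) = a2 * a3 * (x - y) * (a1 * x * (y - z) - y * (a2 * y - a3 * z)) / ((a1 * x - a2 * y) * (y * (a3 * x - a2 * y) - a3 * z * (x - y))) := by
    rw [qdiv, div_eq_div_iff (mul_ne_zero hD2 (mul_ne_zero (mul_ne_zero hA hA) hEM))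
      (mul_ne_zero hA hEM)]
    ring
  rw [eQ]
  have eQr : ((a2 * y - a3 * z) * (y * (a1 * x - a2 * y) - a3 * z * (x - y)) / (y * (a3 * x - a2 * y) - a3 * z * (x - y))) / ((a2 * y - a3 * z) * (a2 * y - a3 * z) * (y * (a1 * x - a2 * y) - a1 * z * (x - y)) / (a1 * a2 * (y - z) * (y * (a3 * x - a2 * y) - a3 * z * (x - y)))) = a1 * a2 * (y - z) * (y * (a1 * x - a2 * y) - a3 * z * (x - y)) / ((a2 * y - a3 * z) * (y * (a1 * x - a2 * y) - a1 * z * (x - y))) := by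
    rw [qdiv, div_eq_div_iff (mul_ne_zero hEM (mul_ne_zero (mul_ne_zero hC hC) hD2))
      (mul_ne_zero hC hD2)]
    ring
  rw [eQr]
  have eC2 : (y * (a1 * x - a2 * y) * (y * (a1 * x - a2 * y) - a3 * z * (x - y)) / (a3 * (x - y) * (y * (a1 * x - a2 * y) - a1 * z * (x - y)))) / a2 * (a2 * a3 * (x - y) * (a1 * x * (y - z) - y * (a2 * y - a3 * z)) / ((a1 * x - a2 * y) * (y * (a3 * x - a2 * y) - a3 * z * (x - y)))) = y * (y * (a1 * x - a2 * y) - a3 * z * (x - y)) * (a1 * x * (y - z) - y * (a2 * y - a3 * z)) / ((y * (a1 * x - a2 * y) - a1 * z * (x - y)) * (y * (a3 * x - a2 * y) - a3 * z * (x - y))) := by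
    rw [qmul, div_eq_div_iff (mul_ne_zero (mul_ne_zero (mul_ne_zero (mul_ne_zero hp3 h1) hD2) hp2)
      (mul_ne_zero hA hEM)) (mul_ne_zero hD2 hEM)]
    ring
  have eC3 : (x * (a1 * x - a2 * y) / (a2 * (x - y))) / a3 * (a2 * a3 * (x - y) * (a1 * x * (y - z) - y * (a2 * y - a3 * z)) / ((a1 * x - a2 * y) * (y * (a3 * x - a2 * y) - a3 * z * (x - y)))) = x * (a1 * x * (y - z) - y * (a2 * y - a3 * z)) / (y * (a3 * x - a2 * y) - a3 * z * (x - y)) := by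
    rw [qmul, div_eq_div_iff (mul_ne_zero (mul_ne_zero (mul_ne_zero hp2 h1) hp3)
      (mul_ne_zero hA hEM)) hEM]
    ring
  rw [eC2, eC3]
  have eR1 : (z * (a2 * y - a3 * z) / (a2 * (y - z))) / a1 * (a1 * a2 * (y - z) * (y * (a1 * x - a2 * y) - a3 * z * (x - y)) / ((a2 * y - a3 * z) * (y * (a1 * x - a2 * y) - a1 * z * (x - y)))) = z * (y * (a1 * x - a2 * y) - a3 * z * (x - y)) / (y * (a1 * x - a2 * y) - a1 * z * (x - y)) := by
    rw [qmul, div_eq_div_iff (mul_ne_zero (mul_ne_zero (mul_ne_zero hp2 h4) hp1)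
      (mul_ne_zero hC hD2)) hD2]
    ring
  have eR2 : (y * (a2 * y - a3 * z) * (a1 * x * (y - z) - y * (a2 * y - a3 * z)) / (a1 * (y - z) * (y * (a3 * x - a2 * y) - a3 * z * (x - y)))) / a2 * (a1 * a2 * (y - z) * (y * (a1 * x - a2 * y) - a3 * z * (x - y)) / ((a2 * y - a3 * z) * (y * (a1 * x - a2 * y) - a1 * z * (x - y)))) = y * (y * (a1 * x - a2 * y) - a3 * z * (x - y)) * (a1 * x * (y - z) - y * (a2 * y - a3 * z)) / ((y * (a1 * x - a2 * y) - a1 * z * (x - y)) * (y * (a3 * x - a2 * y) - a3 * z * (x - y))) := by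
    rw [qmul, div_eq_div_iff (mul_ne_zero (mul_ne_zero (mul_ne_zero (mul_ne_zero hp1 h4) hEM) hp2)
      (mul_ne_zero hC hD2)) (mul_ne_zero hD2 hEM)]
    ring
  rw [eR1, eR2]
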